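/- Let A and B be real symmetric positive definite d×d matrices and let ℝ^d = V₁ ⊕ … ⊕ V_r be the orthogonal decomposition into eigenspaces of A with pairwise distinct eigenvalues. Then M(A, B) + d = Σ_{i=1}^r √( tr(B|_{V_i}) · tr(B⁻¹|_{V_i}) ). -/

import Mathlib

open Matrix

/-- Eigenspace of a `d × d` real matrix `A` (acting on Euclidean space) for the (potential)
eigenvalue `μ`. -/
noncomputable def eigSp {d : ℕ} (A : Matrix (Fin d) (Fin d) ℝ) (μ : ℝ) :
    Submodule ℝ (EuclideanSpace ℝ (Fin d)) :=
  Module.End.eigenspace (Matrix.toEuclideanLin A) μ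

/-- `A` is aligned with `B` if every eigenspace of `B` is contained in an eigenspace of `A`. -/
def IsAligned {d : ℕ} (A B : Matrix (Fin d) (Fin d) ℝ) : Prop :=
  ∀ μ : ℝ, ∃ ν : ℝ, eigSp B μ ≤ eigSp A ν

/-- The misalignment `M(A, B)`: the infimum, over symmetric positive definite matrices `S`
aligned with `A`, of `(1/2) · tr(S⁻¹ B + B⁻¹ S) − d`. -/
noncomputable def misalignment {d : ℕ} (A B : Matrix (Fin d) (Fin d) ℝ) : ℝ :=
  sInf {m : ℝ | ∃ S : Matrix (Fin d) (Fin d) ℝ,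
    S.PosDef ∧ IsAligned S A ∧ m = (1 / 2) * (S⁻¹ * B + B⁻¹ * S).trace - d}

/-- `tr(B|_V)`: the trace of the linear map `V → V`, `v ↦ pr_V (B v)`, where `pr_V` is the
orthogonal projection onto the subspace `V`. -/
noncomputable def restrictTrace {d : ℕ} (B : Matrix (Fin d) (Fin d) ℝ)
    (V : Submodule ℝ (EuclideanSpace ℝ (Fin d))) : ℝ :=
  LinearMap.trace ℝ V
    (((V.orthogonalProjectionOnto).toLinearMap.comp (Matrix.toEuclideanLin B)).comp V.subtype)

open scoped RealInnerProductSpace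

noncomputable section Helpers

variable {d : ℕ}

/-- Orthogonal projection onto `V` as an endomorphism of the ambient space. -/
noncomputable def projL (V : Submodule ℝ (EuclideanSpace ℝ (Fin d))) :
    EuclideanSpace ℝ (Fin d) →ₗ[ℝ] EuclideanSpace ℝ (Fin d) :=
  V.subtype ∘ₗ (V.orthogonalProjectionOnto).toLinearMap

lemma projL_mem (V : Submodule ℝ (EuclideanSpace ℝ (Fin d))) (v : EuclideanSpace ℝ (Fin d)) :
    projL V v ∈ V := (V.orthogonalProjectionOnto v).2

lemma projL_of_mem {V : Submodule ℝ (EuclideanSpace ℝ (Fin d))}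
    {v : EuclideanSpace ℝ (Fin d)} (hv : v ∈ V) : projL V v = v := by
  simpa [projL] using congrArg Subtype.val (Submodule.orthogonalProjectionOnto_mem_subspace_eq_self (K := V) ⟨v, hv⟩)

lemma projL_of_orthogonal {V : Submodule ℝ (EuclideanSpace ℝ (Fin d))}
    {v : EuclideanSpace ℝ (Fin d)} (hv : v ∈ Vᗮ) : projL V v = 0 := by
  simp [projL, Submodule.orthogonalProjectionOnto_apply_of_mem_orthogonal hv]

lemma inner_projL (V : Submodule ℝ (EuclideanSpace ℝ (Fin d)))
    (x y : EuclideanSpace ℝ (Fin d)) : ⟪projL V x, y⟫ = ⟪x, projL V y⟫ :=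
  Submodule.inner_starProjection_left_eq_right V x y

lemma toEuclideanLin_mul (M N : Matrix (Fin d) (Fin d) ℝ) :
    toEuclideanLin (M * N) = toEuclideanLin M ∘ₗ toEuclideanLin N := by
  rw [toEuclideanLin_eq_toLin]
  exact Matrix.toLin_mul _ (PiLp.basisFun 2 ℝ (Fin d)) _ M N

lemma trace_toEuclideanLin (M : Matrix (Fin d) (Fin d) ℝ) :
    LinearMap.trace ℝ (EuclideanSpace ℝ (Fin d)) (toEuclideanLin M) = M.trace := by
  rw [toEuclideanLin_eq_toLin,
    LinearMap.trace_eq_matrix_trace ℝ (PiLp.basisFun 2 ℝ (Fin d)), LinearMap.toMatrix_toLin]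

lemma inner_toEuclideanLin (M : Matrix (Fin d) (Fin d) ℝ) (x : EuclideanSpace ℝ (Fin d)) :
    ⟪x, toEuclideanLin M x⟫ = dotProduct (WithLp.equiv 2 _ x) (M *ᵥ (WithLp.equiv 2 _ x)) := by
  rw [EuclideanSpace.inner_eq_star_dotProduct, dotProduct_comm]; rfl

lemma posDef_inner {M : Matrix (Fin d) (Fin d) ℝ} (hM : M.PosDef)
    {x : EuclideanSpace ℝ (Fin d)} (hx : x ≠ 0) : 0 < ⟪x, toEuclideanLin M x⟫ := by
  rw [inner_toEuclideanLin]
  have := hM.dotProduct_mulVec_pos (x := WithLp.equiv 2 _ x) (by simpa using hx)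
  simpa using this

lemma posDef_of_inner {M : Matrix (Fin d) (Fin d) ℝ}
    (h1 : (toEuclideanLin M).IsSymmetric)
    (h2 : ∀ x : EuclideanSpace ℝ (Fin d), x ≠ 0 → 0 < ⟪x, toEuclideanLin M x⟫) : M.PosDef := by
  refine PosDef.of_dotProduct_mulVec_pos (isHermitian_iff_isSymmetric.mpr h1) fun x hx => ?_
  have := h2 ((WithLp.equiv 2 _).symm x) (by simpa using hx)
  rw [inner_toEuclideanLin] at this
  simpa using this

lemma restrictTrace_eq_trace (B : Matrix (Fin d) (Fin d) ℝ)
    (V : Submodule ℝ (EuclideanSpace ℝ (Fin d))) :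
    restrictTrace B V
      = LinearMap.trace ℝ (EuclideanSpace ℝ (Fin d)) (projL V ∘ₗ toEuclideanLin B) := by
  rw [restrictTrace, ← LinearMap.trace_comp_comm']
  rfl

lemma inner_orthogonalProjectionOnto_left_eq_right' (V : Submodule ℝ (EuclideanSpace ℝ (Fin d)))
    (u v : EuclideanSpace ℝ (Fin d)) :
    ⟪(V.orthogonalProjectionOnto u : EuclideanSpace ℝ (Fin d)), v⟫
      = ⟪u, (V.orthogonalProjectionOnto v : EuclideanSpace ℝ (Fin d))⟫ :=
  Submodule.inner_starProjection_left_eq_right V u v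

lemma restrictTrace_pos {B : Matrix (Fin d) (Fin d) ℝ} (hB : B.PosDef)
    {V : Submodule ℝ (EuclideanSpace ℝ (Fin d))} (hV : V ≠ ⊥) : 0 < restrictTrace B V := by
  classical
  set f : V →ₗ[ℝ] V :=
    ((V.orthogonalProjectionOnto).toLinearMap.comp (Matrix.toEuclideanLin B)).comp V.subtype with hf
  have hrank : 0 < Module.finrank ℝ V := by
    rw [Module.finrank_pos_iff]
    obtain ⟨x, hx, hx0⟩ := V.ne_bot_iff.mp hV
    exact ⟨⟨x, hx⟩, 0, by simp [Subtype.ext_iff, hx0]⟩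
  let b : OrthonormalBasis (Fin (Module.finrank ℝ V)) ℝ V := stdOrthonormalBasis ℝ V
  have htr : restrictTrace B V = ∑ k, ⟪(b k : EuclideanSpace ℝ (Fin d)),
      Matrix.toEuclideanLin B (b k)⟫ := by
    rw [restrictTrace, LinearMap.trace_eq_matrix_trace ℝ b.toBasis, Matrix.trace]
    refine Finset.sum_congr rfl fun k _ => ?_
    rw [Matrix.diag_apply, LinearMap.toMatrix_apply, b.coe_toBasis_repr_apply,
      b.repr_apply_apply]
    have : (f (b.toBasis k) : EuclideanSpace ℝ (Fin d))
        = (V.orthogonalProjectionOnto (Matrix.toEuclideanLin B (b k)) : EuclideanSpace ℝ (Fin d)) := by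
      simp [hf, b.coe_toBasis]
    rw [Submodule.coe_inner, this, real_inner_comm,
      inner_orthogonalProjectionOnto_left_eq_right', Submodule.orthogonalProjectionOnto_mem_subspace_eq_self]
    exact real_inner_comm _ _
  rw [htr]
  refine Finset.sum_pos (fun k _ => posDef_inner hB ?_) (by simp [Finset.univ_nonempty_iff, ← Fin.pos_iff_nonempty, hrank])
  intro h
  have h0 : b k = (0 : V) := Submodule.coe_eq_zero.mp h
  have := b.orthonormal.1 k
  rw [h0] at this
  simp at this

lemma projL_sum_eq_self {r : ℕ} {V : Fin r → Submodule ℝ (EuclideanSpace ℝ (Fin d))}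
    (horth : ∀ i j, i ≠ j → V i ≤ (V j)ᗮ) (hsup : (⨆ i, V i) = ⊤)
    (v : EuclideanSpace ℝ (Fin d)) : ∑ i, projL (V i) v = v := by
  have hw : v - ∑ i, projL (V i) v ∈ (⨆ i, V i)ᗮ := by
    rw [← Submodule.iInf_orthogonal]
    refine Submodule.mem_iInf _ |>.mpr fun j => ?_
    rw [Submodule.mem_orthogonal]
    intro u hu
    rw [inner_sub_right, inner_sum]
    have hsum : ∑ i, ⟪u, projL (V i) v⟫ = ⟪u, v⟫ := by
      rw [Finset.sum_eq_single j]
      · rw [← inner_projL, projL_of_mem hu]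
      · intro i _ hij
        rw [← inner_projL, projL_of_orthogonal (horth j i (fun h => hij h.symm) hu), inner_zero_left]
      · simp
    rw [hsum, sub_self]
  rw [hsup, Submodule.top_orthogonal_eq_bot, Submodule.mem_bot, sub_eq_zero] at hw
  exact hw.symm

lemma core {r : ℕ} (B : Matrix (Fin d) (Fin d) ℝ)
    {V : Fin r → Submodule ℝ (EuclideanSpace ℝ (Fin d))}
    (horth : ∀ i j, i ≠ j → V i ≤ (V j)ᗮ)
    (hsup : (⨆ i, V i) = ⊤) (c : Fin r → ℝ) (hc : ∀ i, 0 < c i) :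
    (Matrix.toEuclideanLin.symm (∑ i, c i • projL (V i))).PosDef ∧
    (∀ i, ∀ v ∈ V i,
      Matrix.toEuclideanLin (Matrix.toEuclideanLin.symm (∑ i, c i • projL (V i))) v = c i • v) ∧
    ((Matrix.toEuclideanLin.symm (∑ i, c i • projL (V i)))⁻¹ * B).trace
      = ∑ i, (c i)⁻¹ * restrictTrace B (V i) ∧
    (B⁻¹ * Matrix.toEuclideanLin.symm (∑ i, c i • projL (V i))).trace
      = ∑ i, c i * restrictTrace B⁻¹ (V i) := by
  classical
  set Slin : EuclideanSpace ℝ (Fin d) →ₗ[ℝ] EuclideanSpace ℝ (Fin d) :=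
    ∑ i, c i • projL (V i) with hSlin
  set S : Matrix (Fin d) (Fin d) ℝ := Matrix.toEuclideanLin.symm Slin with hSdef
  have hS : Matrix.toEuclideanLin S = Slin := Matrix.toEuclideanLin.apply_symm_apply Slin
  -- eigen property
  have heig : ∀ i, ∀ v ∈ V i, Slin v = c i • v := by
    intro i v hv
    rw [hSlin, LinearMap.sum_apply, Finset.sum_eq_single i]
    · rw [LinearMap.smul_apply, projL_of_mem hv]
    · intro j _ hji
      rw [LinearMap.smul_apply, projL_of_orthogonal (horth i j (fun h => hji h.symm) hv),
        smul_zero]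
    · simp
  -- symmetry
  have hsymm : Slin.IsSymmetric := by
    intro x y
    rw [hSlin, LinearMap.sum_apply, LinearMap.sum_apply, sum_inner, inner_sum]
    refine Finset.sum_congr rfl fun i _ => ?_
    rw [LinearMap.smul_apply, LinearMap.smul_apply, real_inner_smul_left,
      real_inner_smul_right, inner_projL]
  -- pos def
  have hposS : S.PosDef := by
    refine posDef_of_inner (by rw [hS]; exact hsymm) fun x hx => ?_
    rw [hS, hSlin, LinearMap.sum_apply, inner_sum]
    have hterm : ∀ i, ⟪x, (c i • projL (V i)) x⟫ = c i * ‖projL (V i) x‖ ^ 2 := by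
      intro i
      rw [LinearMap.smul_apply, real_inner_smul_right]
      congr 1
      rw [← projL_of_mem (projL_mem (V i) x), ← inner_projL, projL_of_mem (projL_mem (V i) x),
        real_inner_self_eq_norm_sq]
    have hex : ∃ i, projL (V i) x ≠ 0 := by
      by_contra h
      push_neg at h
      apply hx
      rw [← projL_sum_eq_self horth hsup x]
      simp [h]
    obtain ⟨i0, hi0⟩ := hex
    refine Finset.sum_pos' (fun i _ => ?_) ⟨i0, Finset.mem_univ i0, ?_⟩
    · rw [hterm i]
      exact mul_nonneg (hc i).le (by positivity)
    · rw [hterm i0]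
      exact mul_pos (hc i0) (pow_pos (norm_pos_iff.mpr hi0) 2)
  -- inverse
  set Sinvlin : EuclideanSpace ℝ (Fin d) →ₗ[ℝ] EuclideanSpace ℝ (Fin d) :=
    ∑ i, (c i)⁻¹ • projL (V i) with hSinvlin
  set Sinv : Matrix (Fin d) (Fin d) ℝ := Matrix.toEuclideanLin.symm Sinvlin with hSinvdef
  have hSinv : Matrix.toEuclideanLin Sinv = Sinvlin := Matrix.toEuclideanLin.apply_symm_apply _
  have hprojproj : ∀ i j (v : EuclideanSpace ℝ (Fin d)),
      projL (V j) (projL (V i) v) = if i = j then projL (V i) v else 0 := by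
    intro i j v
    by_cases h : i = j
    · subst h; simp [projL_of_mem (projL_mem (V i) v)]
    · simp [h, projL_of_orthogonal (horth i j h (projL_mem (V i) v))]
  have hmulinv : S * Sinv = 1 := by
    apply Matrix.toEuclideanLin.injective
    rw [toEuclideanLin_mul, hS, hSinv]
    have h1 : Matrix.toEuclideanLin (1 : Matrix (Fin d) (Fin d) ℝ) = LinearMap.id := by
      rw [Matrix.toEuclideanLin_eq_toLin, Matrix.toLin_one]
    rw [h1]
    refine LinearMap.ext fun v => ?_
    have key : ∀ j, Slin (((c j)⁻¹ • projL (V j)) v) = projL (V j) v := by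
      intro j
      rw [LinearMap.smul_apply, _root_.map_smul, hSlin, LinearMap.sum_apply]
      have hcongr : ∀ i : Fin r, (c i • projL (V i)) (projL (V j) v)
          = if j = i then c i • projL (V j) v else 0 := by
        intro i
        rw [LinearMap.smul_apply, hprojproj j i]
        by_cases h : j = i <;> simp [h, eq_comm]
      rw [Finset.sum_congr rfl fun i _ => hcongr i]
      rw [Finset.sum_ite_eq Finset.univ j (fun i => c i • projL (V j) v)]
      simp [smul_smul, inv_mul_cancel₀ (hc j).ne']
    have expand : (Slin ∘ₗ Sinvlin) v = ∑ j, Slin (((c j)⁻¹ • projL (V j)) v) := by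
      show Slin (Sinvlin v) = _
      have h2 : Sinvlin v = ∑ j, ((c j)⁻¹ • projL (V j)) v := by
        rw [hSinvlin]; exact LinearMap.sum_apply _ _ v
      rw [h2]
      exact map_sum Slin (fun j => ((c j)⁻¹ • projL (V j)) v) Finset.univ
    rw [expand, LinearMap.id_apply, Finset.sum_congr rfl fun j _ => key j]
    exact projL_sum_eq_self horth hsup v
  have hSinv_eq : S⁻¹ = Sinv := Matrix.inv_eq_right_inv hmulinv
  refine ⟨hposS, fun i v hv => by rw [hS]; exact heig i v hv, ?_, ?_⟩
  · rw [hSinv_eq, ← trace_toEuclideanLin, toEuclideanLin_mul, hSinv, hSinvlin,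
      ← Module.End.mul_eq_comp, Finset.sum_mul]
    rw [Finset.sum_congr rfl fun i _ => smul_mul_assoc ((c i)⁻¹) (projL (V i)) (toEuclideanLin B)]
    rw [map_sum]
    refine Finset.sum_congr rfl fun i _ => ?_
    rw [_root_.map_smul, smul_eq_mul, Module.End.mul_eq_comp, restrictTrace_eq_trace]
  · rw [← trace_toEuclideanLin, toEuclideanLin_mul, hS, hSlin,
      ← Module.End.mul_eq_comp, Finset.mul_sum]
    rw [Finset.sum_congr rfl fun i _ => mul_smul_comm (c i) (toEuclideanLin B⁻¹) (projL (V i))]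
    rw [map_sum]
    refine Finset.sum_congr rfl fun i _ => ?_
    rw [_root_.map_smul, smul_eq_mul, Module.End.mul_eq_comp, LinearMap.trace_comp_comm',
      restrictTrace_eq_trace]

lemma aligned_repr {r : ℕ} (A : Matrix (Fin d) (Fin d) ℝ)
    {V : Fin r → Submodule ℝ (EuclideanSpace ℝ (Fin d))} {μ : Fin r → ℝ}
    (hV : ∀ i, V i = eigSp A (μ i)) (hne : ∀ i, V i ≠ ⊥)
    (horth : ∀ i j, i ≠ j → V i ≤ (V j)ᗮ) (hsup : (⨆ i, V i) = ⊤)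
    {S : Matrix (Fin d) (Fin d) ℝ} (hS : S.PosDef) (hal : IsAligned S A) :
    ∃ c : Fin r → ℝ, (∀ i, 0 < c i)
      ∧ S = Matrix.toEuclideanLin.symm (∑ i, c i • projL (V i)) := by
  choose ν hν using fun i => hal (μ i)
  have heigS : ∀ i, ∀ v ∈ V i, Matrix.toEuclideanLin S v = ν i • v := by
    intro i v hv
    have : v ∈ eigSp S (ν i) := hν i (by rw [← hV i]; exact hv)
    exact Module.End.mem_eigenspace_iff.mp this
  refine ⟨ν, ?_, ?_⟩
  · intro i
    obtain ⟨v, hv, hv0⟩ := (V i).ne_bot_iff.mp (hne i)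
    have hpos := posDef_inner hS hv0
    rw [heigS i v hv, real_inner_smul_right, real_inner_self_eq_norm_sq] at hpos
    have h2 : 0 < ‖v‖ ^ 2 := pow_pos (norm_pos_iff.mpr hv0) 2
    nlinarith
  · rw [LinearEquiv.eq_symm_apply]
    refine LinearMap.ext fun v => ?_
    have hL : Matrix.toEuclideanLin S v = ∑ i, ν i • projL (V i) v := by
      conv_lhs => rw [← projL_sum_eq_self horth hsup v]
      rw [map_sum (Matrix.toEuclideanLin S) (fun i => projL (V i) v) Finset.univ]
      exact Finset.sum_congr rfl fun i _ => heigS i _ (projL_mem (V i) v)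
    rw [hL, LinearMap.sum_apply]
    exact Finset.sum_congr rfl fun i _ => rfl

lemma amgm_eq (aa bb : ℝ) (ha : 0 < aa) (hb : 0 < bb) :
    (Real.sqrt aa / Real.sqrt bb)⁻¹ * aa + (Real.sqrt aa / Real.sqrt bb) * bb
      = 2 * Real.sqrt (aa * bb) := by
  have h1 : Real.sqrt aa ^ 2 = aa := Real.sq_sqrt ha.le
  have h2 : Real.sqrt bb ^ 2 = bb := Real.sq_sqrt hb.le
  have h3 : 0 < Real.sqrt aa := Real.sqrt_pos.mpr ha
  have h4 : 0 < Real.sqrt bb := Real.sqrt_pos.mpr hb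
  rw [Real.sqrt_mul ha.le]
  field_simp
  nlinarith [h1, h2]

lemma amgm_le (aa bb cc : ℝ) (ha : 0 < aa) (hb : 0 < bb) (hc : 0 < cc) :
    2 * Real.sqrt (aa * bb) ≤ cc⁻¹ * aa + cc * bb := by
  have h1 : Real.sqrt (aa * bb) ^ 2 = aa * bb := Real.sq_sqrt (by positivity)
  have h2 : 0 ≤ Real.sqrt (aa * bb) := Real.sqrt_nonneg _
  nlinarith [sq_nonneg (cc * bb - Real.sqrt (aa * bb)), h1, mul_inv_cancel₀ hc.ne',
    mul_pos hc hb, hb, hc, h2, sq_nonneg (cc * bb + Real.sqrt (aa * bb))]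

end Helpers

/-- If `ℝ^d = V₁ ⊕ … ⊕ V_r` is the orthogonal decomposition into eigenspaces
of the positive definite matrix `A` with pairwise distinct eigenvalues, then for every positive
definite `B`: `M(A, B) + d = ∑ i, √( tr(B|_{Vᵢ}) · tr(B⁻¹|_{Vᵢ}) )`. -/
theorem misalignment_add_dim_eq_sum_sqrt {d : ℕ}
    (A B : Matrix (Fin d) (Fin d) ℝ) (hA : A.PosDef) (hB : B.PosDef)
    (r : ℕ) (V : Fin r → Submodule ℝ (EuclideanSpace ℝ (Fin d))) (μ : Fin r → ℝ)
    (hμ : Function.Injective μ)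
    (hV : ∀ i, V i = eigSp A (μ i)) (hne : ∀ i, V i ≠ ⊥)
    (hsup : (⨆ i, V i) = ⊤) :
    misalignment A B + d
      = ∑ i, Real.sqrt (restrictTrace B (V i) * restrictTrace B⁻¹ (V i)) := by
  classical
  have hTsym : (Matrix.toEuclideanLin A).IsSymmetric := isHermitian_iff_isSymmetric.mp hA.1
  have horth : ∀ i j, i ≠ j → V i ≤ (V j)ᗮ := by
    intro i j hij x hx
    rw [Submodule.mem_orthogonal]
    intro u hu
    rw [hV i] at hx
    rw [hV j] at hu
    exact hTsym.orthogonalFamily_eigenspaces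
      (fun h : μ j = μ i => hij (hμ h).symm) ⟨u, hu⟩ ⟨x, hx⟩
  have hbot : ∀ t : ℝ, (∀ i, t ≠ μ i) → eigSp A t = ⊥ := by
    intro t ht
    rw [eq_bot_iff]
    intro x hx
    have hxmem : x ∈ (⨆ i, V i)ᗮ := by
      rw [← Submodule.iInf_orthogonal]
      refine Submodule.mem_iInf _ |>.mpr fun i => ?_
      rw [Submodule.mem_orthogonal]
      intro u hu
      rw [hV i] at hu
      exact hTsym.orthogonalFamily_eigenspaces
        (fun h : μ i = t => ht i h.symm) ⟨u, hu⟩ ⟨x, hx⟩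
    rw [hsup, Submodule.top_orthogonal_eq_bot] at hxmem
    exact hxmem
  set a : Fin r → ℝ := fun i => restrictTrace B (V i) with hadef
  set b : Fin r → ℝ := fun i => restrictTrace B⁻¹ (V i) with hbdef
  have ha : ∀ i, 0 < a i := fun i => restrictTrace_pos hB (hne i)
  have hb : ∀ i, 0 < b i := fun i => restrictTrace_pos (Matrix.posDef_inv_iff.mpr hB) (hne i)
  have hleast : IsLeast {m : ℝ | ∃ S : Matrix (Fin d) (Fin d) ℝ,
      S.PosDef ∧ IsAligned S A ∧ m = (1 / 2) * (S⁻¹ * B + B⁻¹ * S).trace - d}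
      ((∑ i, Real.sqrt (a i * b i)) - d) := by
    constructor
    · -- membership
      set c : Fin r → ℝ := fun i => Real.sqrt (a i) / Real.sqrt (b i) with hcdef
      have hc : ∀ i, 0 < c i := fun i =>
        div_pos (Real.sqrt_pos.mpr (ha i)) (Real.sqrt_pos.mpr (hb i))
      obtain ⟨hpos, heig, htr1, htr2⟩ := core B horth hsup c hc
      refine ⟨Matrix.toEuclideanLin.symm (∑ i, c i • projL (V i)), hpos, ?_, ?_⟩
      · intro t
        by_cases h : ∃ i, t = μ i
        · obtain ⟨i, rfl⟩ := h
          refine ⟨c i, ?_⟩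
          rw [← hV i]
          intro v hv
          exact Module.End.mem_eigenspace_iff.mpr (heig i v hv)
        · push_neg at h
          exact ⟨1, by rw [hbot t h]; exact bot_le⟩
      · rw [Matrix.trace_add, htr1, htr2, ← Finset.sum_add_distrib, Finset.mul_sum]
        have hper : ∀ i, (1 / 2 : ℝ) * ((c i)⁻¹ * a i + c i * b i)
            = Real.sqrt (a i * b i) := by
          intro i
          rw [hcdef]
          rw [amgm_eq (a i) (b i) (ha i) (hb i)]
          ring
        rw [Finset.sum_congr rfl fun i _ => hper i]
    · -- lower bound
      rintro m ⟨S, hSpos, hal, rfl⟩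
      obtain ⟨c, hc, hSeq⟩ := aligned_repr A hV hne horth hsup hSpos hal
      obtain ⟨_, _, htr1, htr2⟩ := core B horth hsup c hc
      rw [hSeq, Matrix.trace_add, htr1, htr2]
      have hle : ∑ i, Real.sqrt (a i * b i)
          ≤ (1 / 2) * ((∑ i, (c i)⁻¹ * a i) + ∑ i, c i * b i) := by
        rw [← Finset.sum_add_distrib, Finset.mul_sum]
        refine Finset.sum_le_sum fun i _ => ?_
        have := amgm_le (a i) (b i) (c i) (ha i) (hb i) (hc i)
        linarith
      linarith
  have hval : misalignment A B = (∑ i, Real.sqrt (a i * b i)) - d := by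
    rw [misalignment]
    exact hleast.csInf_eq
  rw [hval]
  ring
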